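/- Let (M,F) be a model for a self-affine ℤⁿ-tile T = T(A,D) with the same neighbor structure (𝒦(T) = 𝒦(M)). Then for every S ∈ 𝒦(T) and k ∈ ℕ: F^{(k)}(⟨S⟩_M) = ⟨P^{(k)}(S)⟩_M, where ⟨S⟩_M = ⋂_{s∈S}(M+s) and P is the subdivision operator. -/

import Mathlib

open Set Matrix Function

/-- The real matrix obtained from an integer matrix. -/
def intMatToReal {n : ℕ} (A : Matrix (Fin n) (Fin n) ℤ) : Matrix (Fin n) (Fin n) ℝ :=
  A.map (Int.cast : ℤ → ℝ)

/-- The real vector obtained from an integer vector. -/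
def intVecToReal {n : ℕ} (z : Fin n → ℤ) : Fin n → ℝ := fun i => (z i : ℝ)

/-- The cell `⟨S⟩_X = ⋂_{s∈S} (X+s)`. -/
def cellOf {n : ℕ} (X : Set (Fin n → ℝ)) (S : Set (Fin n → ℤ)) : Set (Fin n → ℝ) :=
  ⋂ s ∈ S, (fun x => x + intVecToReal s) '' X

/-- The neighbor structure `𝒦(X)`: nonempty `S ⊆ ℤⁿ` with `⟨S⟩_X ≠ ∅`. -/
def neighborStructure {n : ℕ} (X : Set (Fin n → ℝ)) : Set (Set (Fin n → ℤ)) :=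
  {S | S.Nonempty ∧ (cellOf X S).Nonempty}

/-- The subdivision operator `P(S) = {(p+A)(S) ∈ 𝒦(T) ∣ p ∈ D^S}`. -/
def subdivOp {n : ℕ} (A : Matrix (Fin n) (Fin n) ℤ) (D : Set (Fin n → ℤ))
    (T : Set (Fin n → ℝ)) (S : Set (Fin n → ℤ)) : Set (Set (Fin n → ℤ)) :=
  {S' | S' ∈ neighborStructure T ∧ ∃ p : (Fin n → ℤ) → (Fin n → ℤ),
    (∀ s ∈ S, p s ∈ D) ∧ S' = (fun s => p s + A.mulVec s) '' S}

/-- The subdivision operator extended to collections. -/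
def subdivColl {n : ℕ} (A : Matrix (Fin n) (Fin n) ℤ) (D : Set (Fin n → ℤ))
    (T : Set (Fin n → ℝ)) (𝒞 : Set (Set (Fin n → ℤ))) : Set (Set (Fin n → ℤ)) :=
  {S' | ∃ S ∈ 𝒞, S' ∈ subdivOp A D T S}

/-- The geometric realization `⟨𝒞⟩_X = ⋃_{S∈𝒞} ⟨S⟩_X` of a collection of cells. -/
def cellColl {n : ℕ} (X : Set (Fin n → ℝ)) (𝒞 : Set (Set (Fin n → ℤ))) :
    Set (Fin n → ℝ) :=
  ⋃ S ∈ 𝒞, cellOf X S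

/-- `M` is a `ℤⁿ`-tile. -/
def IsZnTile {n : ℕ} (M : Set (Fin n → ℝ)) : Prop :=
  IsCompact M ∧ M = closure (interior M) ∧
  MeasureTheory.volume (frontier M) = 0 ∧
  (⋃ z : Fin n → ℤ, (fun x => x + intVecToReal z) '' M) = Set.univ ∧
  Pairwise fun z z' : Fin n → ℤ =>
    Disjoint (interior ((fun x => x + intVecToReal z) '' M))
      (interior ((fun x => x + intVecToReal z') '' M))

lemma intVecToReal_add {n : ℕ} (a b : Fin n → ℤ) :
    intVecToReal (a + b) = intVecToReal a + intVecToReal b := by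
  funext i; simp [intVecToReal]

lemma intVecToReal_mulVec {n : ℕ} (A : Matrix (Fin n) (Fin n) ℤ) (z : Fin n → ℤ) :
    intVecToReal (A.mulVec z) = (intMatToReal A).mulVec (intVecToReal z) := by
  funext i
  simp only [intVecToReal, intMatToReal, Matrix.mulVec, dotProduct,
    Matrix.map_apply]
  push_cast
  rfl

/-- The key single-step lemma: `F(⟨S⟩_M) = ⟨P(S)⟩_M`. -/
lemma key_step {n : ℕ} (A : Matrix (Fin n) (Fin n) ℤ) (D : Set (Fin n → ℤ))
    (T M : Set (Fin n → ℝ)) (F : (Fin n → ℝ) ≃ₜ (Fin n → ℝ))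
    (hFM : ⇑F '' M = ⋃ d ∈ D, (fun x => x + intVecToReal d) '' M)
    (hFadd : ∀ (x : Fin n → ℝ) (z : Fin n → ℤ),
      F (x + intVecToReal z) = F x + intVecToReal (A.mulVec z))
    (hsame : neighborStructure T = neighborStructure M)
    (S : Set (Fin n → ℤ)) (hSne : S.Nonempty) :
    ⇑F '' cellOf M S = cellColl M (subdivOp A D T S) := by
  have hs : ∀ s : Fin n → ℤ, ⇑F '' ((fun x => x + intVecToReal s) '' M)
      = ⋃ d ∈ D, (fun x => x + intVecToReal (d + A.mulVec s)) '' M := by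
    intro s
    rw [Set.image_image]
    have h1 : (fun x => F (x + intVecToReal s)) '' M
        = (fun y => y + intVecToReal (A.mulVec s)) '' (⇑F '' M) := by
      rw [Set.image_image]
      exact Set.image_congr fun x _ => hFadd x s
    rw [h1, hFM, Set.image_iUnion₂]
    refine Set.iUnion₂_congr fun d _ => ?_
    rw [Set.image_image]
    refine Set.image_congr fun x _ => ?_
    rw [intVecToReal_add, add_assoc]
  have step1 : ⇑F '' cellOf M S
      = ⋂ s ∈ S, ⋃ d ∈ D, (fun x => x + intVecToReal (d + A.mulVec s)) '' M := by
    rw [cellOf, Set.image_iInter₂ F.bijective]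
    exact Set.iInter₂_congr fun s _ => hs s
  have swap : (⋂ s ∈ S, ⋃ d ∈ D, (fun x => x + intVecToReal (d + A.mulVec s)) '' M)
      = ⋃ p ∈ {p : (Fin n → ℤ) → (Fin n → ℤ) | ∀ s ∈ S, p s ∈ D},
          ⋂ s ∈ S, (fun x => x + intVecToReal (p s + A.mulVec s)) '' M := by
    ext y
    simp only [Set.mem_iInter, Set.mem_iUnion, Set.mem_setOf_eq, exists_prop]
    constructor
    · intro h
      choose! d hd hy using h
      exact ⟨d, hd, hy⟩
    · rintro ⟨p, hp, hy⟩ s hs'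
      exact ⟨p s, hp s hs', hy s hs'⟩
  have himg : ∀ p : (Fin n → ℤ) → (Fin n → ℤ),
      (⋂ s ∈ S, (fun x => x + intVecToReal (p s + A.mulVec s)) '' M)
        = cellOf M ((fun s => p s + A.mulVec s) '' S) := by
    intro p
    rw [cellOf, Set.biInter_image]
  have final : (⋃ p ∈ {p : (Fin n → ℤ) → (Fin n → ℤ) | ∀ s ∈ S, p s ∈ D},
      cellOf M ((fun s => p s + A.mulVec s) '' S)) = cellColl M (subdivOp A D T S) := by
    ext y
    constructor
    · intro hy
      rw [Set.mem_iUnion₂] at hy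
      obtain ⟨p, hp, hy⟩ := hy
      have hS' : (fun s => p s + A.mulVec s) '' S ∈ neighborStructure T := by
        rw [hsame]
        exact ⟨hSne.image _, ⟨y, hy⟩⟩
      exact Set.mem_biUnion ⟨hS', p, hp, rfl⟩ hy
    · intro hy
      rw [cellColl, Set.mem_iUnion₂] at hy
      obtain ⟨S', ⟨_, p, hp, rfl⟩, hy⟩ := hy
      exact Set.mem_biUnion hp hy
  rw [step1, swap, ← final]
  exact Set.iUnion₂_congr fun p _ => himg p

/-- for a model `(M,F)` of a self-affine `ℤⁿ`-tile `T` with the same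
neighbor structure, `F^{(k)}(⟨S⟩_M) = ⟨P^{(k)}(S)⟩_M` for all `S ∈ 𝒦(T)` and `k ∈ ℕ`. -/
theorem model_generalized_set_equation (n : ℕ) (A : Matrix (Fin n) (Fin n) ℤ)
    (hexp : ∀ μ ∈ (A.map (Int.cast : ℤ → ℂ)).charpoly.roots, 1 < ‖μ‖)
    (D : Set (Fin n → ℤ))
    (hD : ∀ z : Fin n → ℤ, ∃! d, d ∈ D ∧ ∃ y : Fin n → ℤ, z = d + A.mulVec y)
    (T : Set (Fin n → ℝ)) (hTne : T.Nonempty) (hTc : IsCompact T)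
    (hTset : (fun x => (intMatToReal A).mulVec x) '' T
      = ⋃ d ∈ D, (fun x => x + intVecToReal d) '' T)
    (M : Set (Fin n → ℝ)) (hM : IsZnTile M)
    (F : (Fin n → ℝ) ≃ₜ (Fin n → ℝ))
    (hFM : ⇑F '' M = ⋃ d ∈ D, (fun x => x + intVecToReal d) '' M)
    (hequiv : ∀ (x : Fin n → ℝ) (z : Fin n → ℤ),
      (intMatToReal A)⁻¹.mulVec (F (x + intVecToReal z))
        = (intMatToReal A)⁻¹.mulVec (F x) + intVecToReal z)
    (hF0 : F 0 = 0)
    (hsame : neighborStructure T = neighborStructure M)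
    (S : Set (Fin n → ℤ)) (hS : S ∈ neighborStructure T) :
    ∀ k : ℕ, (⇑F)^[k] '' cellOf M S = cellColl M ((subdivColl A D T)^[k] {S}) := by
  -- the determinant of `A` is nonzero, since all eigenvalues exceed 1 in modulus
  have hdetC : (A.map (Int.cast : ℤ → ℂ)).det ≠ 0 := by
    intro h
    have hm : ((A.map (Int.cast : ℤ → ℂ)).charpoly).Monic := Matrix.charpoly_monic _
    have hcoeff := Matrix.det_eq_sign_charpoly_coeff (A.map (Int.cast : ℤ → ℂ))
    rw [h] at hcoeff
    have hc0 : (A.map (Int.cast : ℤ → ℂ)).charpoly.coeff 0 = 0 := by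
      rcases mul_eq_zero.mp hcoeff.symm with h1 | h1
      · exact absurd h1 (pow_ne_zero _ (by norm_num))
      · exact h1
    have hroot : (0 : ℂ) ∈ (A.map (Int.cast : ℤ → ℂ)).charpoly.roots := by
      rw [Polynomial.mem_roots hm.ne_zero]
      rw [Polynomial.IsRoot, ← Polynomial.coeff_zero_eq_eval_zero]
      exact hc0
    have := hexp 0 hroot
    simp only [norm_zero] at this
    exact absurd this (by norm_num)
  have hcastC : ((A.det : ℤ) : ℂ) = (A.map (Int.cast : ℤ → ℂ)).det := by
    have := RingHom.map_det (Int.castRingHom ℂ) A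
    simpa using this
  have hdetZ : A.det ≠ 0 := by
    intro h
    apply hdetC
    rw [← hcastC, h, Int.cast_zero]
  have hdetR : (intMatToReal A).det ≠ 0 := by
    have : ((A.det : ℤ) : ℝ) = (intMatToReal A).det := by
      have := RingHom.map_det (Int.castRingHom ℝ) A
      simpa [intMatToReal] using this
    rw [← this]
    exact_mod_cast hdetZ
  have hAinv : (intMatToReal A) * (intMatToReal A)⁻¹ = 1 :=
    Matrix.mul_nonsing_inv _ (isUnit_iff_ne_zero.mpr hdetR)
  have hFadd : ∀ (x : Fin n → ℝ) (z : Fin n → ℤ),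
      F (x + intVecToReal z) = F x + intVecToReal (A.mulVec z) := by
    intro x z
    have h := congrArg ((intMatToReal A).mulVec) (hequiv x z)
    rw [Matrix.mulVec_add, Matrix.mulVec_mulVec, Matrix.mulVec_mulVec, hAinv,
      Matrix.one_mulVec, Matrix.one_mulVec, ← intVecToReal_mulVec] at h
    exact h
  -- every cell in the iterated subdivision is nonempty
  have hne : ∀ k : ℕ, ∀ S' ∈ (subdivColl A D T)^[k] {S}, S'.Nonempty := by
    intro k
    induction k with
    | zero =>
      intro S' hS'
      simp only [Function.iterate_zero, id_eq, Set.mem_singleton_iff] at hS'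
      subst hS'
      exact hS.1
    | succ k ih =>
      intro S' hS'
      rw [Function.iterate_succ_apply'] at hS'
      obtain ⟨S'', _, hmem⟩ := hS'
      exact hmem.1.1
  intro k
  induction k with
  | zero =>
    simp only [Function.iterate_zero, id_eq, Set.image_id']
    rw [cellColl]
    simp
  | succ k ih =>
    rw [Function.iterate_succ' (⇑F) k, Set.image_comp, ih,
      Function.iterate_succ_apply' (subdivColl A D T) k {S}]
    set 𝒞 := (subdivColl A D T)^[k] {S} with h𝒞
    rw [cellColl, Set.image_iUnion₂]
    have hstep : ∀ S' ∈ 𝒞, ⇑F '' cellOf M S' = cellColl M (subdivOp A D T S') :=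
      fun S' h => key_step A D T M F hFM hFadd hsame S' (hne k S' h)
    calc (⋃ S' ∈ 𝒞, ⇑F '' cellOf M S')
        = ⋃ S' ∈ 𝒞, cellColl M (subdivOp A D T S') := Set.iUnion₂_congr hstep
      _ = cellColl M (subdivColl A D T 𝒞) := by
          ext y
          constructor
          · intro hy
            rw [Set.mem_iUnion₂] at hy
            obtain ⟨S', hS', hy⟩ := hy
            rw [cellColl, Set.mem_iUnion₂] at hy
            obtain ⟨S'', hS'', hy⟩ := hy
            exact Set.mem_biUnion ⟨S', hS', hS''⟩ hy
          · intro hy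
            rw [cellColl, Set.mem_iUnion₂] at hy
            obtain ⟨S'', hmem, hy⟩ := hy
            obtain ⟨S', hS', hS''⟩ := hmem
            exact Set.mem_biUnion hS' (Set.mem_biUnion hS'' hy)
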